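/- Let n0, n1 ≥ 1 be natural numbers and h ≥ 1. Then the number of binary sequences x in B_{n0,n1} with τ(x) = 2h − 1 is exactly 2 · C(n0 − 1, h − 1) · C(n1 − 1, h − 1), where C(a,b) denotes the binomial coefficient. -/

import Mathlib

/-- The number of jumps `τ(x) = |{i ∈ [n-1] : x_i ≠ x_{i+1}}|` of a binary sequence
`x ∈ {0,1}^n`. -/
def tau {n : ℕ} (x : Fin n → Bool) : ℕ :=
  (Finset.univ.filter (fun i : Fin n =>
    ∃ h : (i : ℕ) + 1 < n, x i ≠ x ⟨(i : ℕ) + 1, h⟩)).card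

/-- `B_{n0,n1}`, the set of binary sequences of length `n0 + n1` with exactly
`n0` zeros and `n1` ones. -/
def Bseq (n0 n1 : ℕ) : Finset (Fin (n0 + n1) → Bool) :=
  Finset.univ.filter (fun x =>
    (Finset.univ.filter (fun i => x i = false)).card = n0 ∧
    (Finset.univ.filter (fun i => x i = true)).card = n1)

open Finset

def Zc {n : ℕ} (x : Fin n → Bool) : ℕ := (univ.filter (fun i => x i = false)).card

def hdi {n : ℕ} (b : Bool) (x : Fin n → Bool) : Prop := ∀ h : 0 < n, x ⟨0, h⟩ = b

instance {n : ℕ} (b : Bool) : DecidablePred (hdi (n := n) b) := fun x => by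
  unfold hdi; infer_instance

def cnt (n : ℕ) (b : Bool) (n0 t : ℕ) : ℕ :=
  (univ.filter (fun x : Fin n → Bool => Zc x = n0 ∧ tau x = t ∧ hdi b x)).card

def g (n0 n1 t : ℕ) : ℕ :=
  if t = 0 then (if n1 = 0 ∧ 1 ≤ n0 then 1 else 0)
  else if n0 = 0 ∨ n1 = 0 then 0
  else if t % 2 = 1 then (n0-1).choose (t/2) * (n1-1).choose (t/2)
  else (n0-1).choose (t/2) * (n1-1).choose (t/2 - 1)

lemma Zc_cons {n : ℕ} (b : Bool) (y : Fin n → Bool) :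
    Zc (Fin.cons b y) = (if b = false then 1 else 0) + Zc y := by
  unfold Zc
  rw [card_filter, card_filter, Fin.sum_univ_succ]
  simp [Fin.cons_zero, Fin.cons_succ]

lemma tau_cons {m : ℕ} (b : Bool) (y : Fin (m+1) → Bool) :
    tau (Fin.cons b y) = (if b = y 0 then 0 else 1) + tau y := by
  unfold tau
  rw [card_filter, card_filter, Fin.sum_univ_succ]
  congr 1
  · simp only [Fin.val_zero, Fin.cons_zero]
    have e : ∀ h : 0 + 1 < m + 1 + 1,
        (Fin.cons b y : Fin (m+2) → Bool) ⟨0 + 1, h⟩ = y 0 := by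
      intro h
      have : (⟨0 + 1, h⟩ : Fin (m+2)) = Fin.succ 0 := by ext; simp
      rw [this, Fin.cons_succ]
    by_cases hb : b = y 0
    · simp [hb, e]
    · simp [hb, e]
  · apply Finset.sum_congr rfl
    intro i _
    congr 1
    refine propext ?_
    constructor
    · rintro ⟨h, hne⟩
      have h' : (i : ℕ) + 1 < m + 1 := by
        have := h; simp at this; omega
      refine ⟨h', ?_⟩
      have e2 : (⟨(i.succ : ℕ) + 1, h⟩ : Fin (m+2)) = Fin.succ ⟨(i:ℕ)+1, h'⟩ := by
        ext; simp
      rw [e2, Fin.cons_succ, Fin.cons_succ] at hne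
      exact hne
    · rintro ⟨h, hne⟩
      have h' : ((i.succ : ℕ)) + 1 < m + 2 := by simp; omega
      refine ⟨h', ?_⟩
      have e2 : (⟨(i.succ : ℕ) + 1, h'⟩ : Fin (m+2)) = Fin.succ ⟨(i:ℕ)+1, h⟩ := by
        ext; simp
      rw [e2, Fin.cons_succ, Fin.cons_succ]
      exact hne

lemma hdi_cons {n : ℕ} (b c : Bool) (y : Fin n → Bool) :
    hdi b (Fin.cons c y) ↔ c = b := by
  unfold hdi
  constructor
  · intro h; exact h (Nat.succ_pos n)
  · intro h _; exact h

lemma hdi_iff {m : ℕ} (b : Bool) (y : Fin (m+1) → Bool) :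
    hdi b y ↔ y 0 = b := by
  unfold hdi
  constructor
  · intro h
    exact h (Nat.succ_pos m)
  · intro h h'
    exact h

lemma hdi_true_iff {n : ℕ} (hn : 0 < n) (y : Fin n → Bool) :
    hdi true y ↔ ¬ hdi false y := by
  constructor
  · intro h hc
    have h1 := h hn
    have h2 := hc hn
    simp [h1] at h2
  · intro h h'
    cases hb : y ⟨0, h'⟩
    · exact absurd (fun _ => hb) h
    · rfl

lemma card_split {n : ℕ} (P : (Fin (n+1) → Bool) → Prop) [DecidablePred P] :
    (univ.filter P).card
      = (univ.filter (fun y : Fin n → Bool => P (Fin.cons false y))).card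
      + (univ.filter (fun y => P (Fin.cons true y))).card := by
  rw [card_filter, card_filter, card_filter]
  rw [← Equiv.sum_comp (Fin.consEquiv (fun _ : Fin (n+1) => Bool))
      (fun x => if P x then 1 else 0)]
  rw [Fintype.sum_prod_type, Fintype.sum_bool]
  have e : ∀ b (y : Fin n → Bool),
      (Fin.consEquiv (fun _ : Fin (n+1) => Bool)) (b, y) = Fin.cons b y := fun _ _ => rfl
  simp only [e]
  exact add_comm _ _

lemma cnt_split_head {n : ℕ} (hn : 0 < n) (Q : (Fin n → Bool) → Prop) [DecidablePred Q] :
    (univ.filter Q).card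
      = (univ.filter (fun y => Q y ∧ hdi false y)).card
      + (univ.filter (fun y => Q y ∧ hdi true y)).card := by
  rw [← card_filter_add_card_filter_not (s := univ.filter Q) (hdi false),
    filter_filter, filter_filter]
  congr 2
  apply filter_congr
  intro y _
  rw [hdi_true_iff hn]

lemma cnt_head_zero {n : ℕ} (hn : 0 < n) (t : ℕ) : cnt n false 0 t = 0 := by
  unfold cnt
  rw [card_eq_zero, filter_eq_empty_iff]
  rintro x - ⟨hz, -, hh⟩
  have h0 := hh hn
  have : (⟨0, hn⟩ : Fin n) ∈ univ.filter (fun i => x i = false) := by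
    simp [h0]
  rw [Zc, card_eq_zero] at hz
  simp [hz] at this

lemma rec_false_succ (m n0 t : ℕ) :
    cnt (m+2) false (n0+1) (t+1) = cnt (m+1) false n0 (t+1) + cnt (m+1) true n0 t := by
  unfold cnt
  rw [card_split]
  have h2 : (univ.filter (fun y : Fin (m+1) → Bool =>
      Zc (Fin.cons true y) = n0+1 ∧ tau (Fin.cons true y) = t+1
        ∧ hdi false (Fin.cons true y))).card = 0 := by
    rw [card_eq_zero, filter_eq_empty_iff]
    intro y _
    simp [hdi_cons]
  rw [h2, add_zero]
  have h1 : (univ.filter (fun y : Fin (m+1) → Bool =>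
      Zc (Fin.cons false y) = n0+1 ∧ tau (Fin.cons false y) = t+1
        ∧ hdi false (Fin.cons false y)))
      = univ.filter (fun y : Fin (m+1) → Bool =>
        Zc y = n0 ∧ (if false = y 0 then 0 else 1) + tau y = t+1) := by
    apply filter_congr
    intro y _
    rw [Zc_cons, tau_cons, hdi_cons]
    simp
    intro _
    omega
  rw [h1, cnt_split_head (Nat.succ_pos m)]
  congr 1
  · congr 1
    apply filter_congr
    intro y _
    rw [hdi_iff]
    cases hy : y 0 <;> simp [hy] <;> omega
  · congr 1
    apply filter_congr
    intro y _
    rw [hdi_iff]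
    cases hy : y 0 <;> simp [hy] <;> omega

lemma rec_false_zero (m n0 : ℕ) :
    cnt (m+2) false (n0+1) 0 = cnt (m+1) false n0 0 := by
  unfold cnt
  rw [card_split]
  have h2 : (univ.filter (fun y : Fin (m+1) → Bool =>
      Zc (Fin.cons true y) = n0+1 ∧ tau (Fin.cons true y) = 0
        ∧ hdi false (Fin.cons true y))).card = 0 := by
    rw [card_eq_zero, filter_eq_empty_iff]
    intro y _
    simp [hdi_cons]
  rw [h2, add_zero]
  congr 1
  apply filter_congr
  intro y _
  rw [Zc_cons, tau_cons, hdi_cons, hdi_iff]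
  cases hy : y 0 <;> simp [hy] <;> omega

lemma tau_not {n : ℕ} (x : Fin n → Bool) : tau (fun i => !(x i)) = tau x := by
  unfold tau
  congr 1
  apply filter_congr
  intro i _
  simp

lemma Zc_add_true {n : ℕ} (x : Fin n → Bool) :
    Zc x + (univ.filter (fun i => x i = true)).card = n := by
  have := card_filter_add_card_filter_not (s := (univ : Finset (Fin n)))
    (fun i => x i = false)
  rw [card_univ, Fintype.card_fin] at this
  rw [Zc]
  rw [show (univ.filter (fun i => x i = true)) = (univ.filter (fun a => ¬ x a = false)) from
    filter_congr (by intro i _; simp)]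
  exact this

lemma Zc_not {n : ℕ} (x : Fin n → Bool) : Zc (fun i => !(x i)) = n - Zc x := by
  have h1 : Zc (fun i => !(x i)) = (univ.filter (fun i => x i = true)).card := by
    unfold Zc
    congr 1
    apply filter_congr
    intro i _
    simp
  have h2 := Zc_add_true x
  omega

lemma hdi_not_iff {n : ℕ} (b : Bool) (x : Fin n → Bool) :
    hdi b (fun i => !(x i)) ↔ hdi (!b) x := by
  unfold hdi
  constructor
  · intro h hp
    have := h hp
    cases hx : x ⟨0, hp⟩ <;> simp [hx] at this ⊢ <;> simp [this]
  · intro h hp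
    show (!x ⟨0, hp⟩) = b
    rw [h hp]
    simp

lemma cnt_flip {n n0 t : ℕ} (h : n0 ≤ n) : cnt n true n0 t = cnt n false (n - n0) t := by
  unfold cnt
  apply Finset.card_nbij' (fun x => fun i => !(x i)) (fun x => fun i => !(x i))
  · intro x hx
    simp only [mem_coe, mem_filter, mem_univ, true_and] at hx ⊢
    obtain ⟨hz, ht, hh⟩ := hx
    refine ⟨?_, ?_, ?_⟩
    · rw [Zc_not, hz]
    · rw [tau_not, ht]
    · rw [hdi_not_iff]; simpa using hh
  · intro x hx
    simp only [mem_coe, mem_filter, mem_univ, true_and] at hx ⊢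
    obtain ⟨hz, ht, hh⟩ := hx
    refine ⟨?_, ?_, ?_⟩
    · rw [Zc_not, hz]; omega
    · rw [tau_not, ht]
    · rw [hdi_not_iff]; simpa using hh
  · intro x _; funext i; simp
  · intro x _; funext i; simp

lemma g_zero (n0 n1 : ℕ) : g n0 n1 0 = if n1 = 0 ∧ 1 ≤ n0 then 1 else 0 := by
  simp [g]

lemma g_left_zero (n1 t : ℕ) (ht : t ≠ 0) : g 0 n1 t = 0 := by
  simp [g, ht]

lemma g_right_zero (n0 t : ℕ) (ht : t ≠ 0) : g n0 0 t = 0 := by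
  simp [g, ht]

lemma g_odd (n0 n1 k : ℕ) (h0 : n0 ≠ 0) (h1 : n1 ≠ 0) :
    g n0 n1 (2*k+1) = (n0-1).choose k * (n1-1).choose k := by
  have e0 : 2*k+1 ≠ 0 := by omega
  have e1 : (2*k+1) % 2 = 1 := by omega
  have e2 : (2*k+1) / 2 = k := by omega
  simp [g, e0, e1, e2, h0, h1]

lemma g_even (n0 n1 k : ℕ) (h0 : n0 ≠ 0) (h1 : n1 ≠ 0) :
    g n0 n1 (2*k+2) = (n0-1).choose (k+1) * (n1-1).choose k := by
  have e0 : 2*k+2 ≠ 0 := by omega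
  have e1 : ¬ ((2*k+2) % 2 = 1) := by omega
  have e2 : (2*k+2) / 2 = k + 1 := by omega
  simp [g, e0, e1, e2, h0, h1]

lemma gA (n0 n1 t : ℕ) : g (n0+1) n1 (t+1) = g n0 n1 (t+1) + g n1 n0 t := by
  rcases n1 with _ | b
  · rcases t with _ | t'
    · simp [g]
    · rw [g_right_zero _ _ (by omega), g_right_zero _ _ (by omega),
        g_left_zero _ _ (by omega)]
  · rcases n0 with _ | a
    · rcases Nat.even_or_odd t with ⟨k, hk⟩ | ⟨k, hk⟩
      · have ht1 : t + 1 = 2*k+1 := by omega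
        rw [ht1, g_odd _ _ _ (by omega) (by omega), g_left_zero _ _ (by omega)]
        rcases k with _ | k'
        · have ht0 : t = 0 := by omega
          rw [ht0, g_zero]
          simp
        · have ht : t = 2*k'+2 := by omega
          rw [ht, g_right_zero _ _ (by omega)]
          simp
      · have ht1 : t + 1 = 2*k+2 := by omega
        rw [ht1, g_even _ _ _ (by omega) (by omega), g_left_zero _ _ (by omega),
          hk, g_right_zero _ _ (by omega)]
        simp
    · rcases Nat.even_or_odd t with ⟨k, hk⟩ | ⟨k, hk⟩
      · have ht1 : t + 1 = 2*k+1 := by omega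
        rw [ht1, g_odd _ _ _ (by omega) (by omega), g_odd _ _ _ (by omega) (by omega)]
        rcases k with _ | k'
        · have ht0 : t = 0 := by omega
          rw [ht0, g_zero]
          simp
        · have ht : t = 2*k'+2 := by omega
          rw [ht, g_even _ _ _ (by omega) (by omega)]
          simp only [Nat.add_sub_cancel]
          rw [Nat.choose_succ_succ (a) (k')]
          ring
      · have ht1 : t + 1 = 2*k+2 := by omega
        rw [ht1, g_even _ _ _ (by omega) (by omega), g_even _ _ _ (by omega) (by omega),
          hk, g_odd _ _ _ (by omega) (by omega)]
        simp only [Nat.add_sub_cancel]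
        rw [Nat.choose_succ_succ (a) (k)]
        ring

lemma tau_one (x : Fin 1 → Bool) : tau x = 0 := by
  unfold tau
  rw [card_eq_zero, filter_eq_empty_iff]
  rintro i - ⟨h, -⟩
  omega

lemma cnt_one_false (n0 t : ℕ) : cnt 1 false n0 t = if n0 = 1 ∧ t = 0 then 1 else 0 := by
  unfold cnt
  rw [card_filter]
  rw [← Equiv.sum_comp (Equiv.funUnique (Fin 1) Bool).symm
    (fun x : Fin 1 → Bool => if Zc x = n0 ∧ tau x = t ∧ hdi false x then 1 else 0)]
  rw [Fintype.sum_bool]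
  have e : ∀ b : Bool, (Equiv.funUnique (Fin 1) Bool).symm b = (fun _ : Fin 1 => b) :=
    fun _ => rfl
  simp only [e]
  have htrue : ¬ (Zc (fun _ : Fin 1 => true) = n0 ∧ tau (fun _ : Fin 1 => true) = t
      ∧ hdi false (fun _ : Fin 1 => true)) := by
    rintro ⟨-, -, hh⟩
    have := hh (by omega)
    simp at this
  rw [if_neg htrue, zero_add]
  have hz : Zc (fun _ : Fin 1 => false) = 1 := by simp [Zc]
  have hh : hdi false (fun _ : Fin 1 => false) := fun _ => rfl
  rw [tau_one, hz]
  by_cases hc : n0 = 1 ∧ t = 0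
  · rw [if_pos ⟨hc.1.symm, hc.2.symm, hh⟩, if_pos hc]
  · rw [if_neg (fun ⟨h1, h2, _⟩ => hc ⟨h1.symm, h2.symm⟩), if_neg hc]

lemma MAIN : ∀ n n0 n1 t, n = n0 + n1 → 1 ≤ n → cnt n false n0 t = g n0 n1 t := by
  intro n
  induction n using Nat.strong_induction_on with
  | _ n ih =>
    intro n0 n1 t hn h1
    rcases n with _ | n'
    · omega
    rcases n' with _ | m
    · have hc : (n0 = 1 ∧ n1 = 0) ∨ (n0 = 0 ∧ n1 = 1) := by omega
      rcases hc with ⟨rfl, rfl⟩ | ⟨rfl, rfl⟩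
      · rw [cnt_one_false]
        rcases t with _ | t'
        · rw [g_zero]; simp
        · rw [g_right_zero _ _ (by omega)]; simp
      · rw [cnt_head_zero (by omega)]
        rcases t with _ | t'
        · rw [g_zero]; simp
        · rw [g_left_zero _ _ (by omega)]
    · rcases n0 with _ | k
      · rw [cnt_head_zero (by omega)]
        rcases t with _ | t'
        · rw [g_zero]
          have : n1 ≠ 0 := by omega
          simp [this]
        · rw [g_left_zero _ _ (by omega)]
      · rcases t with _ | t'
        · rw [rec_false_zero, ih (m+1) (by omega) k n1 0 (by omega) (by omega)]
          rw [g_zero, g_zero]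
          by_cases hb : n1 = 0
          · have hk : 1 ≤ k := by omega
            simp [hb, hk]
          · simp [hb]
        · rw [rec_false_succ, ih (m+1) (by omega) k n1 (t'+1) (by omega) (by omega)]
          rw [cnt_flip (show k ≤ m+1 by omega)]
          have hmk : m + 1 - k = n1 := by omega
          rw [hmk, ih (m+1) (by omega) n1 k t' (by omega) (by omega)]
          exact (gA k n1 t').symm

theorem stmt_2 (n0 n1 h : ℕ) (h0 : 1 ≤ n0) (h1 : 1 ≤ n1) (hh : 1 ≤ h) :
    ((Bseq n0 n1).filter (fun x => tau x = 2 * h - 1)).card =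
      2 * Nat.choose (n0 - 1) (h - 1) * Nat.choose (n1 - 1) (h - 1) := by
  have e1 : (Bseq n0 n1).filter (fun x => tau x = 2*h-1)
      = univ.filter (fun x : Fin (n0+n1) → Bool => Zc x = n0 ∧ tau x = 2*h-1) := by
    unfold Bseq
    rw [filter_filter]
    apply filter_congr
    intro x _
    have hzo := Zc_add_true x
    constructor
    · rintro ⟨⟨hf, -⟩, ht⟩
      exact ⟨hf, ht⟩
    · rintro ⟨hf, ht⟩
      refine ⟨⟨hf, ?_⟩, ht⟩
      have : Zc x = (univ.filter (fun i => x i = false)).card := rfl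
      omega
  rw [e1]
  rw [cnt_split_head (show 0 < n0+n1 by omega)
    (fun x : Fin (n0+n1) → Bool => Zc x = n0 ∧ tau x = 2*h-1)]
  have e2 : (univ.filter (fun y : Fin (n0+n1) → Bool =>
      (Zc y = n0 ∧ tau y = 2*h-1) ∧ hdi false y)).card = cnt (n0+n1) false n0 (2*h-1) := by
    unfold cnt
    congr 1
    apply filter_congr
    intro y _
    tauto
  have e3 : (univ.filter (fun y : Fin (n0+n1) → Bool =>
      (Zc y = n0 ∧ tau y = 2*h-1) ∧ hdi true y)).card = cnt (n0+n1) true n0 (2*h-1) := by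
    unfold cnt
    congr 1
    apply filter_congr
    intro y _
    tauto
  rw [e2, e3, MAIN (n0+n1) n0 n1 (2*h-1) rfl (by omega),
    cnt_flip (show n0 ≤ n0+n1 by omega)]
  have hd : n0+n1-n0 = n1 := by omega
  rw [hd, MAIN (n0+n1) n1 n0 (2*h-1) (by omega) (by omega)]
  have hT : 2*h-1 = 2*(h-1)+1 := by omega
  rw [hT, g_odd _ _ _ (by omega) (by omega), g_odd _ _ _ (by omega) (by omega)]
  ring
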